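/- For all n ≥ 1, (π/2^n) · Σ_{k=1}^{2^{n-1}} (2cos((2k-1)π/2^{n+1}) - 1)^2 < π/4. -/

import Mathlib

open Real Filter Finset

noncomputable def X (n : ℕ) : ℝ := 2 * Real.cos (Real.pi / 2 ^ (n + 1))

lemma sum_two_sin_cos (x : ℝ) (M : ℕ) :
    ∑ k ∈ Finset.range M, 2 * Real.sin x * Real.cos ((2 * k + 1) * x)
      = Real.sin (2 * M * x) := by
  induction M with
  | zero => simp
  | succ M ih =>
    rw [Finset.sum_range_succ, ih]
    have h := Real.sin_sub_sin (2 * ((M : ℝ) + 1) * x) (2 * M * x)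
    rw [show (2 * ((M:ℝ)+1) * x - 2 * M * x)/2 = x by ring,
        show (2 * ((M:ℝ)+1) * x + 2 * M * x)/2 = (2*M+1)*x by ring] at h
    push_cast
    linarith

theorem stmt12 (n : ℕ) (hn : 1 ≤ n) :
    (Real.pi / 2 ^ n) * ∑ k ∈ Finset.range (2 ^ (n - 1)),
      (2 * Real.cos ((2 * k + 1) * Real.pi / 2 ^ (n + 1)) - 1) ^ 2 <
      Real.pi / 4 := by
  obtain ⟨m, rfl⟩ : ∃ m, n = m + 1 := ⟨n - 1, by omega⟩
  simp only [Nat.add_sub_cancel]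
  set x : ℝ := Real.pi / 2 ^ (m + 2) with hxdef
  set y : ℝ := Real.pi / 2 ^ (m + 1) with hydef
  have hx0 : 0 < x := by positivity
  have hy0 : 0 < y := by positivity
  have hxπ : x < Real.pi := by
    rw [hxdef, div_lt_iff₀ (by positivity)]
    nlinarith [Real.pi_pos, one_lt_pow₀ (by norm_num : (1:ℝ) < 2) (show m + 2 ≠ 0 by omega)]
  have hyπ : y < Real.pi := by
    rw [hydef, div_lt_iff₀ (by positivity)]
    nlinarith [Real.pi_pos, one_lt_pow₀ (by norm_num : (1:ℝ) < 2) (show m + 1 ≠ 0 by omega)]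
  have hsx : 0 < Real.sin x := Real.sin_pos_of_pos_of_lt_pi hx0 hxπ
  have hsy : 0 < Real.sin y := Real.sin_pos_of_pos_of_lt_pi hy0 hyπ
  -- sum B of cos((2k+1)x)
  have hBx := sum_two_sin_cos x (2 ^ m)
  have hAy := sum_two_sin_cos y (2 ^ m)
  have hx2 : 2 * ((2:ℝ) ^ m) * x = Real.pi / 2 := by
    rw [hxdef]; rw [show ((2:ℝ)) ^ (m+2) = 4 * 2 ^ m by ring]; field_simp <;> ring
  have hy2 : 2 * ((2:ℝ) ^ m) * y = Real.pi := by
    rw [hydef]; rw [show ((2:ℝ)) ^ (m+1) = 2 * 2 ^ m by ring]; field_simp <;> ring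
  rw [← Finset.mul_sum] at hBx hAy
  push_cast at hBx hAy
  rw [hx2, Real.sin_pi_div_two] at hBx
  rw [hy2, Real.sin_pi] at hAy
  have hB : ∑ k ∈ Finset.range (2 ^ m), Real.cos ((2 * (k:ℝ) + 1) * x)
      = 1 / (2 * Real.sin x) := by
    rw [eq_div_iff (by positivity)]; linear_combination hBx
  have hA : ∑ k ∈ Finset.range (2 ^ m), Real.cos ((2 * (k:ℝ) + 1) * y) = 0 := by
    rcases mul_eq_zero.mp hAy with h | h
    · nlinarith
    · exact h
  have hterm : ∀ k : ℕ, (2 * Real.cos ((2 * (k:ℝ) + 1) * Real.pi / 2 ^ (m + 1 + 1)) - 1) ^ 2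
      = 2 * Real.cos ((2 * (k:ℝ) + 1) * y) + 3 - 4 * Real.cos ((2 * (k:ℝ) + 1) * x) := by
    intro k
    have hang : (2 * (k:ℝ) + 1) * Real.pi / 2 ^ (m + 1 + 1) = (2 * (k:ℝ) + 1) * x := by
      rw [hxdef]; ring
    have hang2 : (2 * (k:ℝ) + 1) * y = 2 * ((2 * (k:ℝ) + 1) * x) := by
      rw [hxdef, hydef, show ((2:ℝ)) ^ (m+2) = 2 * 2 ^ (m+1) by ring]
      field_simp <;> ring
    rw [hang, hang2, Real.cos_two_mul]
    ring
  have hsum : ∑ k ∈ Finset.range (2 ^ m),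
      (2 * Real.cos ((2 * (k:ℝ) + 1) * Real.pi / 2 ^ (m + 1 + 1)) - 1) ^ 2
      = 3 * 2 ^ m - 2 / Real.sin x := by
    rw [Finset.sum_congr rfl fun k _ => hterm k]
    rw [Finset.sum_sub_distrib, Finset.sum_add_distrib, ← Finset.mul_sum, ← Finset.mul_sum,
      hA, hB, Finset.sum_const, Finset.card_range, nsmul_eq_mul]
    push_cast
    field_simp <;> ring
  rw [hsum]
  have hslt : Real.sin x < x := Real.sin_lt hx0
  have h2m : (0:ℝ) < 2 ^ m := by positivity
  have hu : (2:ℝ) ^ m * Real.sin x < Real.pi / 4 := by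
    have h1 : (2:ℝ) ^ m * Real.sin x < 2 ^ m * x := by gcongr
    have h2 : (2:ℝ) ^ m * x = Real.pi / 4 := by
      rw [hxdef, show ((2:ℝ)) ^ (m+2) = 4 * 2 ^ m by ring]; field_simp <;> ring
    linarith
  have key : Real.pi / 2 ^ (m + 1) * (3 * 2 ^ m - 2 / Real.sin x)
      = 3 * Real.pi / 2 - Real.pi / (2 ^ m * Real.sin x) := by
    field_simp <;> ring
  rw [key]
  have hu0 : (0:ℝ) < 2 ^ m * Real.sin x := by positivity
  have hfin : 5 * Real.pi / 4 < Real.pi / (2 ^ m * Real.sin x) := by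
    rw [lt_div_iff₀ hu0]
    nlinarith [mul_lt_mul_of_pos_left hu Real.pi_pos, Real.pi_lt_d2, Real.pi_pos]
  linarith
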